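/- Let R > 0 and let v : [0, R] → ℝ be continuously differentiable with v(0) = 0. Then for every r ∈ [0, R], v(r)² ≤ ∫₀^R ( v′(s)² + (v(s)/s)² ) · s ds. -/

import Mathlib

open Set MeasureTheory intervalIntegral

theorem radial_Linfty_2d (R : ℝ) (hR : 0 < R) (v v' : ℝ → ℝ)
    (hderiv : ∀ s ∈ Set.Icc (0 : ℝ) R, HasDerivAt v (v' s) s)
    (hcont : ContinuousOn v' (Set.Icc (0 : ℝ) R))
    (h0 : v 0 = 0) :
    ∀ r ∈ Set.Icc (0 : ℝ) R,
      (v r) ^ 2 ≤ ∫ s in (0 : ℝ)..R, ((v' s) ^ 2 + (v s / s) ^ 2) * s := by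
  intro r hr
  obtain ⟨hr0, hrR⟩ := hr
  set f : ℝ → ℝ := fun s => ((v' s) ^ 2 + (v s / s) ^ 2) * s with hf
  have hvcont : ContinuousOn v (Icc (0:ℝ) R) := fun x hx =>
    (hderiv x hx).continuousAt.continuousWithinAt
  -- bound on v'
  obtain ⟨C, hC⟩ := isCompact_Icc.exists_bound_of_continuousOn hcont
  have hC0 : 0 ≤ C := le_trans (norm_nonneg _) (hC 0 ⟨le_rfl, hR.le⟩)
  -- |v s| ≤ C * s on Icc 0 R
  have hv_bound : ∀ s ∈ Icc (0:ℝ) R, |v s| ≤ C * s := by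
    intro s hs
    have := Convex.norm_image_sub_le_of_norm_hasDerivWithin_le
      (f := v) (f' := v') (C := C) (s := Icc (0:ℝ) R)
      (fun x hx => (hderiv x hx).hasDerivWithinAt)
      (fun x hx => hC x hx) (convex_Icc _ _) ⟨le_rfl, hR.le⟩ hs
    simpa [h0, Real.norm_eq_abs, abs_of_nonneg hs.1] using this
  -- f is interval integrable on [0, R]
  have hfint : IntervalIntegrable f volume 0 R := by
    rw [intervalIntegrable_iff_integrableOn_Ioc_of_le hR.le]
    have hmeas : AEStronglyMeasurable f (volume.restrict (Ioc (0:ℝ) R)) := by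
      apply ContinuousOn.aestronglyMeasurable _ measurableSet_Ioc
      apply ContinuousOn.mul _ continuousOn_id
      apply ContinuousOn.add
      · exact ((hcont.mono (Ioc_subset_Icc_self)).pow 2)
      · exact (((hvcont.mono Ioc_subset_Icc_self).div continuousOn_id
          (fun x hx => ne_of_gt hx.1)).pow 2)
    apply Integrable.mono' (g := fun _ => (C^2 + C^2) * R)
      (integrableOn_const measure_Ioc_lt_top.ne) hmeas
    filter_upwards [ae_restrict_mem measurableSet_Ioc] with s hs
    have hs0 : 0 < s := hs.1
    have hsR : s ≤ R := hs.2
    have h1 : |v' s| ≤ C := by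
      have := hC s ⟨hs0.le, hsR⟩; simpa [Real.norm_eq_abs] using this
    have h2 : |v s / s| ≤ C := by
      rw [abs_div, abs_of_pos hs0, div_le_iff₀ hs0]
      exact hv_bound s ⟨hs0.le, hsR⟩
    have h1' : (v' s)^2 ≤ C^2 := by nlinarith [abs_nonneg (v' s), sq_abs (v' s)]
    have h2' : (v s / s)^2 ≤ C^2 := by nlinarith [abs_nonneg (v s / s), sq_abs (v s / s)]
    have hnn : 0 ≤ f s := by
      apply mul_nonneg (by positivity) hs0.le
    rw [Real.norm_eq_abs, abs_of_nonneg hnn]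
    calc ((v' s)^2 + (v s / s)^2) * s ≤ (C^2 + C^2) * s := by
          apply mul_le_mul_of_nonneg_right (by linarith) hs0.le
      _ ≤ (C^2 + C^2) * R := by
          apply mul_le_mul_of_nonneg_left hsR (by positivity)
  -- FTC: v r ^ 2 = ∫₀^r 2 v v'
  have hftc : (v r)^2 = ∫ s in (0:ℝ)..r, 2 * v s * v' s := by
    have := intervalIntegral.integral_eq_sub_of_hasDerivAt
      (f := fun x => v x ^ 2) (f' := fun s => 2 * v s * v' s) (a := (0:ℝ)) (b := r)
      (fun x hx => by
        have hx' : x ∈ Icc (0:ℝ) R := by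
          rw [uIcc_of_le hr0] at hx
          exact ⟨hx.1, hx.2.trans hrR⟩
        have := (hderiv x hx').pow 2
        simpa [Pi.pow_def, mul_comm, mul_assoc, mul_left_comm] using this)
      (by
        apply ContinuousOn.intervalIntegrable
        apply ContinuousOn.mul
        · apply ContinuousOn.mul continuousOn_const
          exact hvcont.mono (by rw [uIcc_of_le hr0]; exact Icc_subset_Icc le_rfl hrR)
        · exact hcont.mono (by rw [uIcc_of_le hr0]; exact Icc_subset_Icc le_rfl hrR))
    rw [this]; simp [h0]
  rw [hftc]
  have hsub : uIcc (0:ℝ) r ⊆ uIcc (0:ℝ) R := by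
    rw [uIcc_of_le hr0, uIcc_of_le hR.le]; exact Icc_subset_Icc le_rfl hrR
  have hfint_r : IntervalIntegrable f volume 0 r := hfint.mono_set hsub
  have hgint_r : IntervalIntegrable (fun s => 2 * v s * v' s) volume 0 r := by
    apply ContinuousOn.intervalIntegrable
    apply ContinuousOn.mul
    · apply ContinuousOn.mul continuousOn_const
      exact hvcont.mono (by rw [uIcc_of_le hr0]; exact Icc_subset_Icc le_rfl hrR)
    · exact hcont.mono (by rw [uIcc_of_le hr0]; exact Icc_subset_Icc le_rfl hrR)
  have step1 : (∫ s in (0:ℝ)..r, 2 * v s * v' s) ≤ ∫ s in (0:ℝ)..r, f s := by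
    apply intervalIntegral.integral_mono_on hr0 hgint_r hfint_r
    intro s hs
    rcases eq_or_lt_of_le hs.1 with h | hpos
    · simp [hf, ← h, h0]
    · have hvs : v s / s * s = v s := div_mul_cancel₀ (v s) (ne_of_gt hpos)
      have key := two_mul_le_add_sq (v' s) (v s / s)
      simp only [hf]
      have hne : s ≠ 0 := hpos.ne'
      have h3 : 2 * v s * v' s = 2 * v' s * (v s / s) * s := by
        field_simp
      have h4 := mul_le_mul_of_nonneg_right key hpos.le
      linarith
  have step2 : (∫ s in (0:ℝ)..r, f s) ≤ ∫ s in (0:ℝ)..R, f s := by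
    apply intervalIntegral.integral_mono_interval le_rfl hr0 hrR _ hfint
    filter_upwards [ae_restrict_mem measurableSet_Ioc] with s hs
    exact mul_nonneg (by positivity) hs.1.le
  exact le_trans step1 step2
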